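/- Let V ⊆ ℂ^{n+2} be the complexification of a B-nondegenerate real subspace, α ∈ ℂ×, and L a null line such that L and ρ_V L are complementary; write p := p^V_{α,L}. Then p(0)V = p(∞)V, and for every λ ∈ ℂ ∖ {±α}, p(−λ) ∘ ρ_V ∘ p(λ)^{-1} = ρ_{V′}, where V′ := p(0)V. In particular p(−λ) ∘ ρ_V ∘ p(λ)^{-1} is independent of λ. -/

import Mathlib

noncomputable section

open Module

/-- The complexification `ℂ^{n+2}` of `ℝ^{n+1,1}`. -/
abbrev Cn (n : ℕ) := Fin (n + 2) → ℂ

/-- The complex-bilinear extension `B` of the signature `(n+1,1)` inner product on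
`ℝ^{n+1,1}`. -/
def Bf (n : ℕ) (v w : Cn n) : ℂ :=
  ∑ i : Fin (n + 2), (if (i : ℕ) < n + 1 then 1 else -1) * v i * w i

lemma Bf_add_left {n : ℕ} (v v' w : Cn n) :
    Bf n (v + v') w = Bf n v w + Bf n v' w := by
  simp only [Bf, Pi.add_apply, ← Finset.sum_add_distrib]
  exact Finset.sum_congr rfl fun i _ => by ring

lemma Bf_smul_left {n : ℕ} (c : ℂ) (v w : Cn n) :
    Bf n (c • v) w = c * Bf n v w := by
  simp only [Bf, Pi.smul_apply, smul_eq_mul, Finset.mul_sum]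
  exact Finset.sum_congr rfl fun i _ => by ring

lemma Bf_zero_left {n : ℕ} (w : Cn n) : Bf n 0 w = 0 := by
  simp [Bf]

/-- Complex conjugation on `ℂ^{n+2}`, as a `conj`-semilinear automorphism;
its fixed point set is `ℝ^{n+1,1}`. -/
def conjSL (n : ℕ) : Cn n →ₛₗ[starRingEnd ℂ] Cn n where
  toFun v := fun i => starRingEnd ℂ (v i)
  map_add' a b := by funext i; simp
  map_smul' c v := by funext i; simp

instance : RingHomSurjective (starRingEnd ℂ) :=
  ⟨fun x => ⟨starRingEnd ℂ x, by simp⟩⟩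

/-- The conjugate `Ū` of a complex subspace `U` of `ℂ^{n+2}`. -/
def conjSub {n : ℕ} (U : Submodule ℂ (Cn n)) : Submodule ℂ (Cn n) :=
  U.map (conjSL n)

/-- The real points `ℝ^{n+1,1}` inside `ℂ^{n+2}`, as a real subspace. -/
def realSub (n : ℕ) : Submodule ℝ (Cn n) where
  carrier := {v | ∀ i, starRingEnd ℂ (v i) = v i}
  add_mem' := by
    intro a b ha hb i
    simp only [Pi.add_apply, map_add, ha i, hb i]
  zero_mem' := by intro i; simp
  smul_mem' := by
    intro c v hv i
    simp only [Pi.smul_apply, Complex.real_smul, map_mul, Complex.conj_ofReal, hv i]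

/-- The real points `W ∩ ℝ^{n+1,1}` of a complex subspace `W ⊆ ℂ^{n+2}`. -/
def realPoints {n : ℕ} (W : Submodule ℂ (Cn n)) : Submodule ℝ (Cn n) :=
  (W.restrictScalars ℝ) ⊓ realSub n

/-- The Gram matrix `diag(1,1,1,-1)`. -/
def gram31 (i j : Fin 4) : ℂ :=
  if i = j then (if (i : ℕ) < 3 then 1 else -1) else 0

/-- A real subspace `P` of `ℂ^{n+2}` has signature `(3,1)` if it admits a
basis whose Gram matrix with respect to `B` is `diag(1,1,1,-1)`. -/
def hasSig31 (n : ℕ) (P : Submodule ℝ (Cn n)) : Prop :=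
  ∃ b : Fin 4 → Cn n, (∀ i, b i ∈ P) ∧
    Submodule.span ℝ (Set.range b) = P ∧
    ∀ i j, Bf n (b i) (b j) = gram31 i j

/-- The orthogonal complement of a subspace with respect to `B`. -/
def perp (n : ℕ) (V : Submodule ℂ (Cn n)) : Submodule ℂ (Cn n) where
  carrier := {v | ∀ w ∈ V, Bf n v w = 0}
  add_mem' := by
    intro a b ha hb w hw
    rw [Bf_add_left, ha w hw, hb w hw, add_zero]
  zero_mem' := by
    intro w hw
    exact Bf_zero_left w
  smul_mem' := by
    intro c v hv w hw
    rw [Bf_smul_left, hv w hw, mul_zero]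

/-- `ρ` is the reflection across `V`: the identity on `V` and minus the identity
on `V^⊥`. -/
def IsReflection (n : ℕ) (V : Submodule ℂ (Cn n)) (ρ : Cn n →ₗ[ℂ] Cn n) : Prop :=
  (∀ v ∈ V, ρ v = v) ∧ (∀ v ∈ perp n V, ρ v = -v)

/-- The automorphism `Γ^{ℓ⁺}_{ℓ⁻}(λ)`, where `ℓ⁺, ℓ⁻` are the complementary null
lines spanned by `u` and `w`: it is multiplication by `λ` on `ℓ⁺`, by `λ⁻¹` on
`ℓ⁻` and the identity on `(ℓ⁺ ⊕ ℓ⁻)^⊥`. -/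
def GammaL (n : ℕ) (u w : Cn n) (lam : ℂ) : Cn n →ₗ[ℂ] Cn n where
  toFun v := v + ((lam - 1) * (Bf n v w / Bf n u w)) • u
      + ((lam⁻¹ - 1) * (Bf n v u / Bf n u w)) • w
  map_add' a b := by
    simp only [Bf_add_left]
    module
  map_smul' c v := by
    simp only [Bf_smul_left, RingHom.id_apply]
    module

/-- `λ ↦ λ* = 1/λ̄`. -/
def cstar (z : ℂ) : ℂ := (starRingEnd ℂ z)⁻¹

/-- The linear fractional transformation appearing in the simple factor
`p^V_{α,L}`. -/
def psi (α lam : ℂ) : ℂ := (1 + α) * (lam - α) / ((1 - α) * (lam + α))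

/-- The simple factor `p^V_{α,L}(λ) = Γ^L_{ρ_V L}((1+α)(λ-α)/((1-α)(λ+α)))`,
where `ρ` is the reflection across `V` and `ℓ` spans the null line `L`. -/
def pSF (n : ℕ) (ρ : Cn n →ₗ[ℂ] Cn n) (ℓ : Cn n) (α lam : ℂ) : Cn n →ₗ[ℂ] Cn n :=
  GammaL n ℓ (ρ ℓ) (psi α lam)

/-- The value `p^V_{α,L}(∞) = Γ^L_{ρ_V L}((1+α)/(1-α))`. -/
def pSFinf (n : ℕ) (ρ : Cn n →ₗ[ℂ] Cn n) (ℓ : Cn n) (α : ℂ) : Cn n →ₗ[ℂ] Cn n :=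
  GammaL n ℓ (ρ ℓ) ((1 + α) / (1 - α))
section MyAux

variable {n : ℕ}

lemma Bf_symm (v w : Cn n) : Bf n v w = Bf n w v :=
  Finset.sum_congr rfl fun i _ => by ring

lemma Bf_add_right (v w w' : Cn n) :
    Bf n v (w + w') = Bf n v w + Bf n v w' := by
  rw [Bf_symm, Bf_add_left, Bf_symm w v, Bf_symm w' v]

lemma Bf_smul_right (c : ℂ) (v w : Cn n) :
    Bf n v (c • w) = c * Bf n v w := by
  rw [Bf_symm, Bf_smul_left, Bf_symm w v]

lemma Bf_neg_left (v w : Cn n) : Bf n (-v) w = -Bf n v w := by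
  rw [← neg_one_smul ℂ v, Bf_smul_left]; ring

lemma Bf_neg_right (v w : Cn n) : Bf n v (-w) = -Bf n v w := by
  rw [Bf_symm, Bf_neg_left, Bf_symm w v]

lemma Bf_sub_right (v w w' : Cn n) :
    Bf n v (w - w') = Bf n v w - Bf n v w' := by
  rw [sub_eq_add_neg, Bf_add_right, Bf_neg_right, sub_eq_add_neg]

lemma mem_perp {V : Submodule ℂ (Cn n)} {x : Cn n} :
    x ∈ perp n V ↔ ∀ w ∈ V, Bf n x w = 0 := Iff.rfl

lemma GammaL_apply (u w : Cn n) (lam : ℂ) (v : Cn n) :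
    GammaL n u w lam v = v + ((lam - 1) * (Bf n v w / Bf n u w)) • u
      + ((lam⁻¹ - 1) * (Bf n v u / Bf n u w)) • w := rfl

section Gamma

variable {u w : Cn n}

lemma Gamma_B_w (hww : Bf n w w = 0) (hD : Bf n u w ≠ 0) (x : ℂ) (v : Cn n) :
    Bf n (GammaL n u w x v) w = x * Bf n v w := by
  rw [GammaL_apply, Bf_add_left, Bf_add_left, Bf_smul_left, Bf_smul_left, hww]
  field_simp
  ring

lemma Gamma_B_u (huu : Bf n u u = 0) (hwu : Bf n w u = Bf n u w)
    (hD : Bf n u w ≠ 0) (x : ℂ) (v : Cn n) :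
    Bf n (GammaL n u w x v) u = x⁻¹ * Bf n v u := by
  rw [GammaL_apply, Bf_add_left, Bf_add_left, Bf_smul_left, Bf_smul_left, huu, hwu]
  field_simp
  ring

lemma Gamma_comp (huu : Bf n u u = 0) (hww : Bf n w w = 0)
    (hwu : Bf n w u = Bf n u w) (hD : Bf n u w ≠ 0) (x y : ℂ) (v : Cn n) :
    GammaL n u w x (GammaL n u w y v) = GammaL n u w (x * y) v := by
  rw [GammaL_apply u w x, Gamma_B_w hww hD, Gamma_B_u huu hwu hD,
    GammaL_apply u w y, GammaL_apply u w (x * y), mul_inv]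
  match_scalars <;> ring

end Gamma

lemma psi_zero (α : ℂ) (hα : α ≠ 0) : psi α 0 = -((1 + α) / (1 - α)) := by
  by_cases h1 : α = 1
  · subst h1; norm_num [psi]
  · have h1' : (1 : ℂ) - α ≠ 0 := sub_ne_zero.mpr fun h => h1 h.symm
    unfold psi
    field_simp
    rw [zero_sub, zero_add, mul_neg, neg_div, mul_div_cancel_right₀ _ hα]

lemma psi_eq_zero_of (α lam : ℂ) (h : (1 + α) / (1 - α) = 0) : psi α lam = 0 := by
  rcases div_eq_zero_iff.mp h with h' | h'
  · unfold psi; rw [h', zero_mul, zero_div]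
  · unfold psi; rw [h', zero_mul, div_zero]

lemma psi_neg (α lam : ℂ) (hα : α ≠ 0) (h1 : lam ≠ α) (h2 : lam ≠ -α) :
    psi α (-lam) = ((1 + α) / (1 - α)) ^ 2 * (psi α lam)⁻¹ := by
  by_cases hA : α = 1
  · subst hA; norm_num [psi]
  by_cases hB : α = -1
  · subst hB; norm_num [psi]
  have hn1 : (1 : ℂ) - α ≠ 0 := sub_ne_zero.mpr fun h => hA h.symm
  have hn2 : (1 : ℂ) + α ≠ 0 := fun h => hB (by linear_combination h)
  have hn3 : lam - α ≠ 0 := sub_ne_zero.mpr h1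
  have hn4 : lam + α ≠ 0 := fun h => h2 (by linear_combination h)
  have hn5 : -lam + α ≠ 0 := fun h => h1 (by linear_combination -h)
  unfold psi
  rw [inv_div]
  field_simp
  ring

/-- `Bf` as a Mathlib bilinear form. -/
def BFm (n : ℕ) : LinearMap.BilinForm ℂ (Cn n) :=
  LinearMap.mk₂ ℂ (Bf n) Bf_add_left Bf_smul_left Bf_add_right Bf_smul_right

lemma BFm_apply (v w : Cn n) : BFm n v w = Bf n v w := rfl

lemma BFm_isRefl : (BFm n).IsRefl := fun v w h => by
  rwa [BFm_apply, Bf_symm]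

lemma perp_eq_orthogonal (V : Submodule ℂ (Cn n)) :
    perp n V = (BFm n).orthogonal V := by
  ext x
  rw [mem_perp, LinearMap.BilinForm.mem_orthogonal_iff]
  constructor
  · intro h y hy
    show BFm n y x = 0
    rw [BFm_apply, Bf_symm]; exact h y hy
  · intro h y hy
    have := h y hy
    change BFm n y x = 0 at this; rw [BFm_apply] at this
    rw [Bf_symm]; exact this

lemma perp_isCompl {V : Submodule ℂ (Cn n)}
    (hVnd : ∀ v ∈ V, (∀ w ∈ V, Bf n v w = 0) → v = 0) :
    IsCompl V (perp n V) := by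
  rw [perp_eq_orthogonal]
  apply LinearMap.BilinForm.isCompl_orthogonal_of_restrict_nondegenerate BFm_isRefl
  refine ((BFm_isRefl (n := n)).domRestrict V).nondegenerate_iff_separatingLeft.mpr ?_
  intro x hx
  refine Subtype.ext (hVnd x.1 x.2 fun w hw => ?_)
  exact hx ⟨w, hw⟩

end MyAux

/-- Let `V` be the complexification of a `B`-nondegenerate real
subspace (with reflection `ρ = ρ_V`), `α ∈ ℂ^×` and `L = ⟨ℓ⟩` a null line with `L` and
`ρ_V L` complementary; write `p = p^V_{α,L}`.  Then `p(0)V = p(∞)V`, and for every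
`λ ∈ ℂ ∖ {±α}`, `p(-λ) ∘ ρ_V ∘ p(λ)⁻¹ = ρ_{V'}` where `V' := p(0)V`; in particular it
is independent of `λ`. -/
theorem statement4 (n : ℕ) (V : Submodule ℂ (Cn n))
    (hVconj : conjSub V = V)
    (hVnd : ∀ v ∈ V, (∀ w ∈ V, Bf n v w = 0) → v = 0)
    (ρ : Cn n →ₗ[ℂ] Cn n) (hρ : IsReflection n V ρ)
    (α : ℂ) (hα : α ≠ 0)
    (ℓ : Cn n) (hℓ : ℓ ≠ 0) (hℓnull : Bf n ℓ ℓ = 0)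
    (hℓcompl : Bf n ℓ (ρ ℓ) ≠ 0) :
    Submodule.map (pSF n ρ ℓ α 0) V = Submodule.map (pSFinf n ρ ℓ α) V ∧
      ∀ lam : ℂ, lam ≠ α → lam ≠ -α →
        ∀ ρ' : Cn n →ₗ[ℂ] Cn n,
          IsReflection n (Submodule.map (pSF n ρ ℓ α 0) V) ρ' →
          (pSF n ρ ℓ α (-lam)).comp ρ = ρ'.comp (pSF n ρ ℓ α lam) := by
  classical
  have hcompl : IsCompl V (perp n V) := perp_isCompl hVnd
  have hdecomp : ∀ x : Cn n, ∃ v ∈ V, ∃ v' ∈ perp n V, x = v + v' := by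
    intro x
    have hx : x ∈ V ⊔ perp n V := by
      rw [codisjoint_iff.mp hcompl.codisjoint]; trivial
    obtain ⟨v, hv, v', hv', h⟩ := Submodule.mem_sup.mp hx
    exact ⟨v, hv, v', hv', h.symm⟩
  have hρρ : ∀ x, ρ (ρ x) = x := by
    intro x
    obtain ⟨v, hv, v', hv', rfl⟩ := hdecomp x
    rw [map_add, hρ.1 v hv, hρ.2 v' hv', map_add, hρ.1 v hv, map_neg,
      hρ.2 v' hv', neg_neg]
  have hρB : ∀ x y, Bf n (ρ x) (ρ y) = Bf n x y := by
    intro x y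
    obtain ⟨v, hv, v', hv', rfl⟩ := hdecomp x
    obtain ⟨z, hz, z', hz', rfl⟩ := hdecomp y
    rw [map_add, map_add, hρ.1 v hv, hρ.2 v' hv', hρ.1 z hz, hρ.2 z' hz']
    have e1 : Bf n v' z = 0 := hv' z hz
    have e2 : Bf n v z' = 0 := by rw [Bf_symm]; exact hz' v hv
    simp only [Bf_add_left, Bf_add_right, Bf_neg_left, Bf_neg_right, e1, e2]
    ring
  -- basic facts about u = ℓ, w = ρ ℓ
  have hww : Bf n (ρ ℓ) (ρ ℓ) = 0 := by rw [hρB]; exact hℓnull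
  have hwu : Bf n (ρ ℓ) ℓ = Bf n ℓ (ρ ℓ) := Bf_symm _ _
  have hD : Bf n ℓ (ρ ℓ) ≠ 0 := hℓcompl
  -- ℓ + ρ ℓ ∈ V
  have huwV : ℓ + ρ ℓ ∈ V := by
    obtain ⟨p, hp, q, hq, hpq⟩ := hdecomp (ℓ + ρ ℓ)
    have hfix : ℓ + ρ ℓ = p + -q := by
      have : ρ (ℓ + ρ ℓ) = ℓ + ρ ℓ := by
        rw [map_add, hρρ]; exact add_comm _ _
      calc ℓ + ρ ℓ = ρ (ℓ + ρ ℓ) := this.symm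
        _ = ρ (p + q) := by rw [← hpq]
        _ = p + -q := by rw [map_add, hρ.1 p hp, hρ.2 q hq]
    have hq0 : q = 0 := by
      have h1 : p + q = p + -q := by rw [← hpq]; exact hfix
      have h2 : q = -q := add_left_cancel h1
      have h3 : (2 : ℂ) • q = 0 := by
        rw [two_smul]; nth_rewrite 1 [h2]; exact neg_add_cancel q
      rcases smul_eq_zero.mp h3 with h | h
      · exact absurd h (by norm_num)
      · exact h
    rw [hpq, hq0, add_zero]; exact hp
  -- ℓ - ρ ℓ ∈ perp V
  have huwP : ℓ - ρ ℓ ∈ perp n V := by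
    obtain ⟨p, hp, q, hq, hpq⟩ := hdecomp (ℓ - ρ ℓ)
    have hfix : ℓ - ρ ℓ = -p + q := by
      have : ρ (ℓ - ρ ℓ) = -(ℓ - ρ ℓ) := by
        rw [map_sub, hρρ, neg_sub]
      calc ℓ - ρ ℓ = ρ (ρ (ℓ - ρ ℓ)) := (hρρ _).symm
        _ = ρ (-(ℓ - ρ ℓ)) := by rw [this]
        _ = ρ (-(p + q)) := by rw [← hpq]
        _ = -p + q := by
            rw [map_neg, map_add, hρ.1 p hp, hρ.2 q hq]
            rw [neg_add, neg_neg]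
    have hp0 : p = 0 := by
      have h1 : p + q = -p + q := by rw [← hpq]; exact hfix
      have h2 : p = -p := add_right_cancel h1
      have h3 : (2 : ℂ) • p = 0 := by
        rw [two_smul]; nth_rewrite 1 [h2]; exact neg_add_cancel p
      rcases smul_eq_zero.mp h3 with h | h
      · exact absurd h (by norm_num)
      · exact h
    rw [hpq, hp0, zero_add]; exact hq
  have h2V : ∀ z ∈ V, Bf n z ℓ = Bf n z (ρ ℓ) := by
    intro z hz
    have h0 : Bf n z (ℓ - ρ ℓ) = 0 := by rw [Bf_symm]; exact huwP z hz
    rw [Bf_sub_right] at h0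
    exact sub_eq_zero.mp h0
  have h1P : ∀ v' ∈ perp n V, Bf n v' ℓ = -Bf n v' (ρ ℓ) := by
    intro v' hv'
    have h0 : Bf n v' (ℓ + ρ ℓ) = 0 := hv' _ huwV
    rw [Bf_add_right] at h0
    linear_combination h0
  -- ρ intertwines Gamma
  have hG2 : ∀ (m : ℂ) (x : Cn n),
      ρ (GammaL n ℓ (ρ ℓ) m x) = GammaL n ℓ (ρ ℓ) m⁻¹ (ρ x) := by
    intro m x
    have e1 : Bf n (ρ x) (ρ ℓ) = Bf n x ℓ := hρB x ℓ
    have e2 : Bf n (ρ x) ℓ = Bf n x (ρ ℓ) := by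
      calc Bf n (ρ x) ℓ = Bf n (ρ x) (ρ (ρ ℓ)) := by rw [hρρ]
        _ = Bf n x (ρ ℓ) := hρB _ _
    rw [GammaL_apply, map_add, map_add, map_smul, map_smul, hρρ,
      GammaL_apply, e1, e2, inv_inv]
    module
  -- orthogonality of Gamma images across V / perp V
  have horth : ∀ (t : ℂ) (v' z : Cn n), v' ∈ perp n V → z ∈ V →
      Bf n (GammaL n ℓ (ρ ℓ) t v') (GammaL n ℓ (ρ ℓ) t z) = 0 := by
    intro t v' z hv' hz
    have hβ : Bf n v' ℓ = -Bf n v' (ρ ℓ) := h1P v' hv'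
    have hγ : Bf n z ℓ = Bf n z (ρ ℓ) := h2V z hz
    have hvz : Bf n v' z = 0 := hv' z hz
    have hBw := Gamma_B_w hww hD t v'
    have hBu := Gamma_B_u hℓnull hwu hD t v'
    conv_lhs => rw [GammaL_apply ℓ (ρ ℓ) t z]
    rw [Bf_add_right, Bf_add_right, Bf_smul_right, Bf_smul_right, hBw, hBu,
      GammaL_apply ℓ (ρ ℓ) t v', Bf_add_left, Bf_add_left, Bf_smul_left,
      Bf_smul_left, hvz, Bf_symm ℓ z, Bf_symm (ρ ℓ) z, hβ, hγ]
    ring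
  -- Γ(-1) preserves V
  have hG6 : ∀ v ∈ V, GammaL n ℓ (ρ ℓ) (-1) v ∈ V := by
    intro v hv
    have key : GammaL n ℓ (ρ ℓ) (-1) v
        = v + (((-1 : ℂ) - 1) * (Bf n v (ρ ℓ) / Bf n ℓ (ρ ℓ))) • (ℓ + ρ ℓ) := by
      rw [GammaL_apply, ← h2V v hv, h2V v hv]
      have : ((-1 : ℂ))⁻¹ = -1 := by norm_num
      rw [this, ← h2V v hv, smul_add, add_assoc]
    rw [key]
    exact V.add_mem hv (V.smul_mem _ huwV)
  set c : ℂ := (1 + α) / (1 - α) with hc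
  have hψ0 : psi α 0 = -c := psi_zero α hα
  constructor
  · -- p(0) V = p(∞) V
    have hps0 : ∀ v, pSF n ρ ℓ α 0 v = GammaL n ℓ (ρ ℓ) (-c) v := by
      intro v; rw [pSF, hψ0]
    have hpsi : ∀ v, pSFinf n ρ ℓ α v = GammaL n ℓ (ρ ℓ) c v := by
      intro v; rfl
    ext z
    simp only [Submodule.mem_map]
    constructor
    · rintro ⟨v, hv, rfl⟩
      refine ⟨GammaL n ℓ (ρ ℓ) (-1) v, hG6 v hv, ?_⟩
      rw [hpsi, Gamma_comp hℓnull hww hwu hD, hps0, mul_neg_one]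
    · rintro ⟨v, hv, rfl⟩
      refine ⟨GammaL n ℓ (ρ ℓ) (-1) v, hG6 v hv, ?_⟩
      rw [hps0, Gamma_comp hℓnull hww hwu hD, hpsi]
      norm_num
  · -- the reflection identity
    intro lam h1 h2 ρ' hρ'
    have hψn : psi α (-lam) = c ^ 2 * (psi α lam)⁻¹ := psi_neg α lam hα h1 h2
    set a : ℂ := psi α lam with ha
    set m : ℂ := -(c⁻¹ * a) with hm
    have hc0 : c = 0 → a = 0 := fun h => psi_eq_zero_of α lam h
    have hcm : (-c) * m = a := by
      by_cases hcz : c = 0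
      · rw [hcz, hc0 hcz]; simp
      · rw [hm]; field_simp
    have hcm' : (-c) * m⁻¹ = psi α (-lam) := by
      rw [hψn, hm]
      by_cases hcz : c = 0
      · rw [hcz]; simp
      · rw [inv_neg, mul_inv, inv_inv]; ring
    apply LinearMap.ext
    intro x
    simp only [LinearMap.comp_apply]
    show GammaL n ℓ (ρ ℓ) (psi α (-lam)) (ρ x)
      = ρ' (GammaL n ℓ (ρ ℓ) a x)
    obtain ⟨v, hv, v', hv', hsplit⟩ := hdecomp (GammaL n ℓ (ρ ℓ) m x)
    have hRHSarg : GammaL n ℓ (ρ ℓ) a x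
        = GammaL n ℓ (ρ ℓ) (-c) v + GammaL n ℓ (ρ ℓ) (-c) v' := by
      rw [← map_add, ← hsplit, Gamma_comp hℓnull hww hwu hD, hcm]
    have hMem1 : GammaL n ℓ (ρ ℓ) (-c) v ∈ Submodule.map (pSF n ρ ℓ α 0) V := by
      refine ⟨v, hv, ?_⟩
      rw [pSF, hψ0]
    have hMem2 : GammaL n ℓ (ρ ℓ) (-c) v'
        ∈ perp n (Submodule.map (pSF n ρ ℓ α 0) V) := by
      intro y hy
      obtain ⟨z, hz, rfl⟩ := hy
      have hz' : pSF n ρ ℓ α 0 z = GammaL n ℓ (ρ ℓ) (-c) z := by rw [pSF, hψ0]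
      rw [hz']
      exact horth (-c) v' z hv' hz
    calc GammaL n ℓ (ρ ℓ) (psi α (-lam)) (ρ x)
        = GammaL n ℓ (ρ ℓ) ((-c) * m⁻¹) (ρ x) := by rw [hcm']
      _ = GammaL n ℓ (ρ ℓ) (-c) (GammaL n ℓ (ρ ℓ) m⁻¹ (ρ x)) :=
          (Gamma_comp hℓnull hww hwu hD _ _ _).symm
      _ = GammaL n ℓ (ρ ℓ) (-c) (ρ (GammaL n ℓ (ρ ℓ) m x)) := by rw [hG2]
      _ = GammaL n ℓ (ρ ℓ) (-c) (ρ (v + v')) := by rw [hsplit]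
      _ = GammaL n ℓ (ρ ℓ) (-c) (v - v') := by
          rw [map_add, hρ.1 v hv, hρ.2 v' hv', sub_eq_add_neg]
      _ = GammaL n ℓ (ρ ℓ) (-c) v - GammaL n ℓ (ρ ℓ) (-c) v' := map_sub _ _ _
      _ = ρ' (GammaL n ℓ (ρ ℓ) (-c) v) + ρ' (GammaL n ℓ (ρ ℓ) (-c) v') := by
          rw [hρ'.1 _ hMem1, hρ'.2 _ hMem2, sub_eq_add_neg]
      _ = ρ' (GammaL n ℓ (ρ ℓ) a x) := by rw [← map_add, ← hRHSarg]

end
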